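/- The k-th entry of the delta sequence of the m-ary reflected Gray code (the position of the digit changed at the k-th transition, positions numbered from 1) equals ρ(k)+1, where ρ(k) is the largest i with m^i dividing k. -/

import Mathlib

/-- The `m`-ary reflected Gray code on `n`-tuples over `{0, …, m-1}`, with the
least significant digit `a₁` last in the list.  For `n = 0` it is the single
empty tuple; each codeword `Cᵢ` of the code for length `n` (1-indexed `i`) is
extended by the digits `0, …, m-1` in increasing order if `i` is odd and in
decreasing order if `i` is even. -/
def mGray (m : ℕ) : ℕ → List (List ℕ)
  | 0 => [[]]
  | n + 1 =>
      ((mGray m n).zipIdx.map (fun p =>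
        (if p.2 % 2 = 0 then List.range m else (List.range m).reverse).map
          (fun d => p.1 ++ [d]))).flatten

/-- `rho m n k` is the largest `i ≤ n` such that `m^i` divides `k`. -/
def rho (m n k : ℕ) : ℕ := Nat.findGreatest (fun i => m ^ i ∣ k) n

theorem flatten_map_range (L m : ℕ) (g : ℕ → ℕ → List ℕ) :
    ((List.range L).map (fun i => (List.range m).map (g i))).flatten
      = (List.range (L*m)).map (fun j => g (j/m) (j%m)) := by
  induction L with
  | zero => simp
  | succ L ih =>
    rw [List.range_succ, Nat.succ_mul, List.range_add, List.map_append, List.flatten_append, ih,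
      List.map_append]
    congr 1
    · simp
      intro a ha
      rw [Nat.mul_comm L m, Nat.mul_add_div (by omega),
        Nat.div_eq_of_lt ha, Nat.mod_eq_of_lt ha, Nat.add_zero]

def grayWord (m : ℕ) : ℕ → ℕ → List ℕ
  | 0, _ => []
  | n+1, i => grayWord m n (i/m) ++ [if (i/m) % 2 = 0 then i % m else m - 1 - i % m]

theorem mGray_eq (m n : ℕ) : mGray m n = (List.range (m^n)).map (grayWord m n) := by
  induction n with
  | zero => simp [mGray, grayWord]
  | succ n ih =>
    rw [mGray, ih]
    have henum : ((List.range (m^n)).map (grayWord m n)).zipIdx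
        = (List.range (m^n)).map (fun i => (grayWord m n i, i)) := by
      apply List.ext_getElem <;> simp [List.getElem_zipIdx]
    rw [henum, List.map_map]
    have hrev : (List.range m).reverse = (List.range m).map (fun d => m - 1 - d) := by
      apply List.ext_getElem <;> simp [Nat.sub_sub]
    have hbody : ((fun p : List ℕ × ℕ =>
        (if p.2 % 2 = 0 then List.range m else (List.range m).reverse).map
          (fun d => p.1 ++ [d])) ∘ fun i => (grayWord m n i, i))
        = fun i => (List.range m).map (fun d =>
            grayWord m n i ++ [if i % 2 = 0 then d else m - 1 - d]) := by
      funext i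
      by_cases h : i % 2 = 0 <;> simp [h, hrev, List.map_map, Function.comp]
    rw [hbody, flatten_map_range]
    rw [pow_succ]
    apply List.ext_getElem <;> simp
    intro i hi
    rw [grayWord]

theorem grayWord_length (m n i : ℕ) : (grayWord m n i).length = n := by
  induction n generalizing i with
  | zero => simp [grayWord]
  | succ n ih => simp [grayWord, ih]

def grayDig (m i e : ℕ) : ℕ :=
  if (i / m^(e+1)) % 2 = 0 then (i/m^e) % m else m - 1 - (i/m^e) % m

theorem grayWord_getD (m : ℕ) : ∀ n i e, e < n →
    (grayWord m n i).getD (n-1-e) 0 = grayDig m i e := by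
  intro n
  induction n with
  | zero => omega
  | succ n ih =>
    intro i e he
    rw [grayWord]
    rcases Nat.eq_zero_or_pos e with rfl | hpos
    · rw [show n+1-1-0 = n from rfl,
        List.getD_append_right _ _ _ _ (by simp [grayWord_length]),
        grayWord_length]
      simp [grayDig, pow_zero, pow_one]
    · obtain ⟨e', rfl⟩ : ∃ e', e = e' + 1 := ⟨e-1, by omega⟩
      rw [show n+1-1-(e'+1) = n-1-e' from by omega,
        List.getD_append _ _ _ _ (by rw [grayWord_length]; omega),
        ih _ e' (by omega)]
      unfold grayDig
      rw [Nat.div_div_eq_div_mul, Nat.div_div_eq_div_mul, ← pow_succ', ← pow_succ']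


theorem pred_div_of_not_dvd {d k : ℕ} (hk : 1 ≤ k) (h : ¬ d ∣ k) : (k-1)/d = k/d := by
  have := Nat.succ_div (a := k-1) (b := d)
  rw [Nat.sub_add_cancel hk, if_neg h] at this
  omega

theorem pred_div_of_dvd {d k : ℕ} (hk : 1 ≤ k) (h : d ∣ k) : (k-1)/d = k/d - 1 := by
  have := Nat.succ_div (a := k-1) (b := d)
  rw [Nat.sub_add_cancel hk, if_pos h] at this
  rw [this, Nat.add_sub_cancel]

theorem pred_mod_of_not_dvd {d k : ℕ} (hk : 1 ≤ k) (h : ¬ d ∣ k) :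
    (k-1) % d = k % d - 1 ∧ 1 ≤ k % d := by
  have h1 := Nat.mod_add_div k d
  have h2 := Nat.mod_add_div (k-1) d
  rw [pred_div_of_not_dvd hk h] at h2
  have h3 : k % d ≠ 0 := fun hc => h (Nat.dvd_of_mod_eq_zero hc)
  omega

theorem pred_mod_of_dvd {d k : ℕ} (hk : 1 ≤ k) (hd : 1 ≤ d) (h : d ∣ k) :
    (k-1) % d = d - 1 := by
  have h1 := Nat.mod_add_div (k-1) d
  rw [pred_div_of_dvd hk h] at h1
  have h3 : d * (k/d) = k := Nat.mul_div_cancel' h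
  have h4 : 1 ≤ k / d := (Nat.one_le_div_iff (by omega)).2 (Nat.le_of_dvd (by omega) h)
  have h5 : d ≤ k := Nat.le_of_dvd (by omega) h
  rw [Nat.mul_sub, h3, Nat.mul_one] at h1
  omega

theorem dig_ne_iff (m k e r : ℕ) (hm : 2 ≤ m) (hk : 1 ≤ k)
    (hr : m^r ∣ k) (hr2 : ¬ m^(r+1) ∣ k) :
    (grayDig m (k-1) e ≠ grayDig m k e ↔ e = r) := by
  have hpe : (0:ℕ) < m^e := Nat.pow_pos (by omega)
  have hpe1 : (0:ℕ) < m^(e+1) := Nat.pow_pos (by omega)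
  rcases lt_trichotomy e r with hlt | rfl | hgt
  · -- digits equal
    have hd1 : m^(e+1) ∣ k := dvd_trans (pow_dvd_pow m (by omega : e+1 ≤ r)) hr
    have hde : m^e ∣ k := dvd_trans (pow_dvd_pow m (by omega : e ≤ r)) hr
    have hdiv : m ∣ k / m^e := by
      rw [Nat.dvd_div_iff_mul_dvd hde, ← pow_succ]
      exact hd1
    have hmod0 : k / m^e % m = 0 := by
      rcases hdiv with ⟨c, hc⟩; simp [hc, Nat.mul_mod_right]
    have hq1 : 1 ≤ k / m^(e+1) := (Nat.one_le_div_iff hpe1).2 (Nat.le_of_dvd (by omega) hd1)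
    have hqe : 1 ≤ k / m^e := (Nat.one_le_div_iff hpe).2 (Nat.le_of_dvd (by omega) hde)
    have hH : (k-1) / m^(e+1) = k / m^(e+1) - 1 := pred_div_of_dvd hk hd1
    have hL : (k-1) / m^e = k / m^e - 1 := pred_div_of_dvd hk hde
    have hLm : (k / m^e - 1) % m = m - 1 := pred_mod_of_dvd hqe (by omega) hdiv
    simp only [grayDig, hH, hL, hLm, hmod0, ne_eq]
    constructor
    · intro hne
      exfalso
      rcases Nat.even_or_odd (k / m^(e+1)) with hev | hod
      · have he1 : k / m^(e+1) % 2 = 0 := Nat.even_iff.1 hev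
        have he2 : (k / m^(e+1) - 1) % 2 = 1 := by omega
        simp [he1, he2] at hne
      · have he1 : k / m^(e+1) % 2 = 1 := Nat.odd_iff.1 hod
        have he2 : (k / m^(e+1) - 1) % 2 = 0 := by omega
        simp [he1, he2] at hne
    · omega
  · -- e = r : digits differ
    constructor
    · intro _; rfl
    intro _
    have hdiv : ¬ m ∣ k / m^e := by
      rw [Nat.dvd_div_iff_mul_dvd hr, ← pow_succ]
      exact hr2
    have hqe : 1 ≤ k / m^e := (Nat.one_le_div_iff hpe).2 (Nat.le_of_dvd (by omega) hr)
    have hL : (k-1) / m^e = k / m^e - 1 := pred_div_of_dvd hk hr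
    have hH : (k-1) / m^(e+1) = k / m^(e+1) := pred_div_of_not_dvd hk hr2
    obtain ⟨hm1, hm2⟩ := pred_mod_of_not_dvd hqe hdiv
    have hlt : k / m^e % m < m := Nat.mod_lt _ (by omega)
    simp only [grayDig, hL, hH, hm1, ne_eq]
    by_cases hp : k / m^(e+1) % 2 = 0 <;> simp [hp] <;> omega
  · -- e > r : digits equal
    have hnd : ¬ m^e ∣ k := fun hc =>
      hr2 (dvd_trans (pow_dvd_pow m (by omega : r+1 ≤ e)) hc)
    have hnd1 : ¬ m^(e+1) ∣ k := fun hc =>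
      hr2 (dvd_trans (pow_dvd_pow m (by omega : r+1 ≤ e+1)) hc)
    have hL : (k-1) / m^e = k / m^e := pred_div_of_not_dvd hk hnd
    have hH : (k-1) / m^(e+1) = k / m^(e+1) := pred_div_of_not_dvd hk hnd1
    simp only [grayDig, hL, hH, ne_eq]
    constructor
    · intro hne; exact absurd trivial hne
    · omega

/-- The `k`-th entry of the delta sequence of the `m`-ary reflected Gray code,
i.e. the position (1-indexed from the right) of the digit changed between the
`k`-th and `(k+1)`-st tuples, equals `ρ(k) + 1`: the digit at position `j`
from the right (list index `n - j`) changes if and only if `j = ρ(k) + 1`. -/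
theorem mGray_delta (m n k : ℕ) (hk1 : 1 ≤ k) (hk2 : k < m ^ n) :
    ∀ j, 1 ≤ j → j ≤ n →
      (((mGray m n).getD (k - 1) []).getD (n - j) 0 ≠
          ((mGray m n).getD k []).getD (n - j) 0 ↔ j = rho m n k + 1) := by
  intro j hj1 hj2
  have hm : 2 ≤ m := by
    by_contra hc
    have : m ^ n ≤ 1 ^ n := Nat.pow_le_pow_left (by omega) n
    simp at this
    omega
  have hr : m ^ (rho m n k) ∣ k :=
    Nat.findGreatest_spec (P := fun i => m ^ i ∣ k) (Nat.zero_le n) (by simp)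
  have hrn : rho m n k ≤ n := Nat.findGreatest_le n
  have hr2 : ¬ m ^ (rho m n k + 1) ∣ k := by
    rcases eq_or_lt_of_le hrn with heq | hlt
    · intro hc
      have h1 : m ^ (rho m n k + 1) ≤ k := Nat.le_of_dvd (by omega) hc
      have h2 : m ^ n ≤ m ^ (rho m n k + 1) :=
        Nat.pow_le_pow_right (by omega) (by omega)
      omega
    · exact Nat.findGreatest_is_greatest (P := fun i => m ^ i ∣ k)
        (Nat.lt_succ_self _) hlt
  have hkn : k - 1 < m ^ n := by omega
  have e1 : (mGray m n).getD (k-1) [] = grayWord m n (k-1) := by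
    rw [mGray_eq, List.getD_eq_getElem _ _ (by simpa using hkn)]
    simp
  have e2 : (mGray m n).getD k [] = grayWord m n k := by
    rw [mGray_eq, List.getD_eq_getElem _ _ (by simpa using hk2)]
    simp
  rw [e1, e2, show n - j = n - 1 - (j - 1) from by omega,
    grayWord_getD m n _ (j-1) (by omega), grayWord_getD m n _ (j-1) (by omega),
    dig_ne_iff m k (j-1) (rho m n k) hm hk1 hr hr2]
  omega
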